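/- Suppose the second-order constant-coefficient system B00 U_tt + C^j U_{tx^j} + B^{jk} U_{x^jx^k} = 0 is semi-strictly definitely hyperbolic: B00 is negative definite; for every unit vector ξ ∈ S^{d−1} all zeros of p^ξ(ξ0) = det B(ξ0,ξ) are real and nonzero; and for each zero of multiplicity ν, dim ker B(ξ0,ξ) = ν. Then for every unit ξ, the first-order symbol pencil (A^0, A(ξ)) is diagonalizable over ℝ: the sum over all eigenvalues λ (including λ = 0, with eigenspace of dimension (d−1)n) of the dimensions of the eigenspaces of (A^0)^{-1}A(ξ) equals (d+1)n. -/

import Mathlib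

open Matrix

/-- The second-order symbol `B(ξ0, ξ) = ξ0² B00 + ξ0 Σ_j ξ_j C^j + Σ_{j,k} ξ_j ξ_k B^{jk}`. -/
noncomputable def Bsym (n d : ℕ) (B00 : Matrix (Fin n) (Fin n) ℝ)
    (Cc : Fin d → Matrix (Fin n) (Fin n) ℝ)
    (B : Fin d → Fin d → Matrix (Fin n) (Fin n) ℝ)
    (ξ0 : ℝ) (ξ : Fin d → ℝ) : Matrix (Fin n) (Fin n) ℝ :=
  ξ0 ^ 2 • B00 + ξ0 • ∑ j, ξ j • Cc j + ∑ j, ∑ k, (ξ j * ξ k) • B j k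

/-- The first-order block symbol `A(ξ0, ξ)`, of size `(d+1)n × (d+1)n`; block index
`Sum.inl ()` is the `P`-block and `Sum.inr i` the `Q_i`-blocks. -/
noncomputable def Asym (n d : ℕ) (B00 : Matrix (Fin n) (Fin n) ℝ)
    (Cc : Fin d → Matrix (Fin n) (Fin n) ℝ)
    (B : Fin d → Fin d → Matrix (Fin n) (Fin n) ℝ)
    (ξ0 : ℝ) (ξ : Fin d → ℝ) :
    Matrix ((Unit ⊕ Fin d) × Fin n) ((Unit ⊕ Fin d) × Fin n) ℝ :=
  fun p q =>
    match p, q with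
    | (Sum.inl _, a), (Sum.inl _, b) => (ξ0 • B00 + ∑ k, ξ k • Cc k) a b
    | (Sum.inl _, a), (Sum.inr j, b) => (∑ k, ξ k • B j k) a b
    | (Sum.inr i, a), (Sum.inl _, b) => if a = b then -ξ i else 0
    | (Sum.inr i, a), (Sum.inr j, b) => if i = j ∧ a = b then ξ0 else 0

/-- The dispersion polynomial `p^ξ(ξ0) = det B(ξ0, ξ)` as a polynomial in `ξ0`. -/
noncomputable def dispPoly (n d : ℕ) (B00 : Matrix (Fin n) (Fin n) ℝ)
    (Cc : Fin d → Matrix (Fin n) (Fin n) ℝ)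
    (B : Fin d → Fin d → Matrix (Fin n) (Fin n) ℝ)
    (ξ : Fin d → ℝ) : Polynomial ℝ :=
  ((Polynomial.X : Polynomial ℝ) ^ 2 • B00.map Polynomial.C +
    (Polynomial.X : Polynomial ℝ) • (∑ j, ξ j • Cc j).map Polynomial.C +
    (∑ j, ∑ k, (ξ j * ξ k) • B j k).map Polynomial.C).det

/-- The block-diagonal matrix `A⁰ = diag(B00, I, ..., I)` of the first-order formulation. -/
noncomputable def A0mat (n d : ℕ) (B00 : Matrix (Fin n) (Fin n) ℝ) :
    Matrix ((Unit ⊕ Fin d) × Fin n) ((Unit ⊕ Fin d) × Fin n) ℝ :=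
  fun p q =>
    match p, q with
    | (Sum.inl _, a), (Sum.inl _, b) => B00 a b
    | (Sum.inr i, a), (Sum.inr j, b) => if i = j ∧ a = b then 1 else 0
    | _, _ => 0

lemma finrank_biSup_of_indep {K V : Type*} [Field K] [AddCommGroup V] [Module K V]
    [FiniteDimensional K V] {ι : Type*} {p : ι → Submodule K V} (hp : iSupIndep p)
    (S : Finset ι) :
    Module.finrank K ↥(⨆ i ∈ S, p i) = ∑ i ∈ S, Module.finrank K ↥(p i) := by
  classical
  induction S using Finset.induction_on with
  | empty => simp
  | insert a S hx ih =>
    have hdisj : Disjoint (p a) (⨆ i ∈ S, p i) :=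
      hp.disjoint_biSup (by simpa using hx)
    rw [Finset.sum_insert hx, ← ih, Finset.iSup_insert]
    have := Submodule.finrank_sup_add_finrank_inf_eq (p a) (⨆ i ∈ S, p i)
    rw [disjoint_iff.mp hdisj] at this
    simpa using this


section main
variable (n d : ℕ) (B00 : Matrix (Fin n) (Fin n) ℝ)
    (Cc : Fin d → Matrix (Fin n) (Fin n) ℝ)
    (B : Fin d → Fin d → Matrix (Fin n) (Fin n) ℝ)
    (ξ0 μ : ℝ) (ξ : Fin d → ℝ)

lemma Asym_decomp :
    Asym n d B00 Cc B ξ0 ξ = Asym n d B00 Cc B 0 ξ + ξ0 • A0mat n d B00 := by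
  funext p q
  rcases p with ⟨s | i, a⟩ <;> rcases q with ⟨t | j, b⟩ <;>
    simp [Asym, A0mat, Matrix.add_apply, Matrix.smul_apply, smul_eq_mul, mul_ite] <;>
    first
    | ring
    | (split_ifs <;> ring)

noncomputable def A0inv : Matrix ((Unit ⊕ Fin d) × Fin n) ((Unit ⊕ Fin d) × Fin n) ℝ :=
  fun p q =>
    match p, q with
    | (Sum.inl _, a), (Sum.inl _, b) => (B00⁻¹) a b
    | (Sum.inr i, a), (Sum.inr j, b) => if i = j ∧ a = b then 1 else 0
    | _, _ => 0

lemma A0_mul_A0inv (h : IsUnit B00.det) :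
    A0mat n d B00 * A0inv n d B00 = 1 := by
  have h1 : B00 * B00⁻¹ = 1 := Matrix.mul_nonsing_inv _ h
  funext p q
  rcases p with ⟨s | i, a⟩ <;> rcases q with ⟨t | j, b⟩ <;>
    simp [Matrix.mul_apply, A0mat, A0inv, Fintype.sum_prod_type, Fintype.sum_sum_type,
      Matrix.one_apply, Prod.ext_iff]
  · have := congrArg (fun M => M a b) h1
    simpa [Matrix.mul_apply, Matrix.one_apply] using this
  · simp [ite_and, Finset.sum_ite_eq, Finset.sum_ite_eq']

lemma Asym_mulVec_inl (x : (Unit ⊕ Fin d) × Fin n → ℝ) (a : Fin n) :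
    (Asym n d B00 Cc B ξ0 ξ).mulVec x (Sum.inl (), a) =
      (∑ b, (ξ0 • B00 + ∑ k, ξ k • Cc k) a b * x (Sum.inl (), b)) +
        ∑ j, ∑ b, (∑ k, ξ k • B j k) a b * x (Sum.inr j, b) := by
  rw [Matrix.mulVec, dotProduct, Fintype.sum_prod_type, Fintype.sum_sum_type]
  simp [Asym]

lemma Asym_mulVec_inr (x : (Unit ⊕ Fin d) × Fin n → ℝ) (i : Fin d) (a : Fin n) :
    (Asym n d B00 Cc B ξ0 ξ).mulVec x (Sum.inr i, a) =
      -ξ i * x (Sum.inl (), a) + ξ0 * x (Sum.inr i, a) := by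
  simp [Matrix.mulVec, dotProduct, Fintype.sum_prod_type, Fintype.sum_sum_type, Asym,
    ite_and, Finset.sum_ite_eq, Finset.sum_ite_eq', ite_mul, mul_ite]

lemma Bsym_mulVec (P : Fin n → ℝ) (a : Fin n) :
    (Bsym n d B00 Cc B ξ0 ξ).mulVec P a =
      ξ0 * ((ξ0 • B00 + ∑ k, ξ k • Cc k).mulVec P a) +
        ∑ j, ξ j * ((∑ k, ξ k • B j k).mulVec P a) := by
  have : Bsym n d B00 Cc B ξ0 ξ =
      ξ0 • (ξ0 • B00 + ∑ k, ξ k • Cc k) + ∑ j, ξ j • (∑ k, ξ k • B j k) := by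
    simp [Bsym, smul_add, Finset.smul_sum, smul_smul, sq]
  have h2 : ∀ (M : Fin d → Matrix (Fin n) (Fin n) ℝ),
      ((∑ j, ξ j • M j) *ᵥ P) a = ∑ j, ξ j * ((M j) *ᵥ P) a := by
    intro M
    simp only [Matrix.mulVec, dotProduct, Matrix.sum_apply, Matrix.smul_apply,
      Finset.sum_mul, smul_eq_mul, Finset.mul_sum]
    rw [Finset.sum_comm]
    exact Finset.sum_congr rfl fun j _ => Finset.sum_congr rfl fun b _ => by ring
  rw [this]
  simp only [Matrix.add_mulVec, Matrix.smul_mulVec, Pi.add_apply, Pi.smul_apply,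
    smul_eq_mul, h2]

/-- the lift of a vector `P` to the big space: `(ξ0 P, ξ1 P, ..., ξd P)`. -/
noncomputable def liftVec (P : Fin n → ℝ) : (Unit ⊕ Fin d) × Fin n → ℝ :=
  fun q => Sum.elim (fun _ => ξ0) ξ q.1 * P q.2

lemma Asym_mulVec_liftVec_inl (P : Fin n → ℝ) (a : Fin n) :
    (Asym n d B00 Cc B ξ0 ξ).mulVec (liftVec n d ξ0 ξ P) (Sum.inl (), a) =
      (Bsym n d B00 Cc B ξ0 ξ).mulVec P a := by
  rw [Asym_mulVec_inl, Bsym_mulVec]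
  simp only [liftVec, Sum.elim_inl, Sum.elim_inr]
  congr 1
  · simp only [Matrix.mulVec, dotProduct, Finset.mul_sum]
    exact Finset.sum_congr rfl fun b _ => by ring
  · refine Finset.sum_congr rfl fun j _ => ?_
    simp only [Matrix.mulVec, dotProduct, Finset.mul_sum]
    exact Finset.sum_congr rfl fun b _ => by ring

lemma Asym_mulVec_liftVec_inr (P : Fin n → ℝ) (i : Fin d) (a : Fin n) :
    (Asym n d B00 Cc B ξ0 ξ).mulVec (liftVec n d ξ0 ξ P) (Sum.inr i, a) = 0 := by
  rw [Asym_mulVec_inr]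
  simp [liftVec]; ring

lemma mem_ker_Asym_iff (x : (Unit ⊕ Fin d) × Fin n → ℝ) :
    x ∈ LinearMap.ker (Asym n d B00 Cc B ξ0 ξ).mulVecLin ↔
      (∀ a, (Asym n d B00 Cc B ξ0 ξ).mulVec x (Sum.inl (), a) = 0) ∧
      (∀ i a, (Asym n d B00 Cc B ξ0 ξ).mulVec x (Sum.inr i, a) = 0) := by
  rw [LinearMap.mem_ker, Matrix.mulVecLin_apply]
  constructor
  · intro h
    exact ⟨fun a => congrFun h _, fun i a => congrFun h _⟩
  · rintro ⟨h1, h2⟩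
    funext q
    rcases q with ⟨s | i, a⟩
    · cases s; exact h1 a
    · exact h2 i a

lemma liftVec_mem_ker_iff (hξ0 : ξ0 ≠ 0) (P : Fin n → ℝ) :
    liftVec n d ξ0 ξ P ∈ LinearMap.ker (Asym n d B00 Cc B ξ0 ξ).mulVecLin ↔
      P ∈ LinearMap.ker (Bsym n d B00 Cc B ξ0 ξ).mulVecLin := by
  rw [mem_ker_Asym_iff, LinearMap.mem_ker, Matrix.mulVecLin_apply]
  constructor
  · rintro ⟨h1, _⟩
    funext a
    have := h1 a
    rw [Asym_mulVec_liftVec_inl] at this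
    exact this
  · intro h
    refine ⟨fun a => ?_, fun i a => Asym_mulVec_liftVec_inr n d B00 Cc B ξ0 ξ P i a⟩
    rw [Asym_mulVec_liftVec_inl, h]
    rfl

lemma eq_liftVec_of_mem_ker (hξ0 : ξ0 ≠ 0) (x : (Unit ⊕ Fin d) × Fin n → ℝ)
    (hx : x ∈ LinearMap.ker (Asym n d B00 Cc B ξ0 ξ).mulVecLin) :
    x = liftVec n d ξ0 ξ (fun a => ξ0⁻¹ * x (Sum.inl (), a)) := by
  rw [mem_ker_Asym_iff] at hx
  funext q
  rcases q with ⟨s | i, a⟩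
  · cases s; simp [liftVec, mul_comm, hξ0]
  · have := hx.2 i a
    rw [Asym_mulVec_inr] at this
    simp only [liftVec, Sum.elim_inr]
    field_simp
    linarith [this]

lemma finrank_ker_Asym (hξ0 : ξ0 ≠ 0) :
    Module.finrank ℝ (LinearMap.ker (Asym n d B00 Cc B ξ0 ξ).mulVecLin) =
      Module.finrank ℝ (LinearMap.ker (Bsym n d B00 Cc B ξ0 ξ).mulVecLin) := by
  refine (LinearEquiv.finrank_eq ?_).symm
  refine
    { toFun := fun P => ⟨liftVec n d ξ0 ξ P.1,
        (liftVec_mem_ker_iff n d B00 Cc B ξ0 ξ hξ0 P.1).mpr P.2⟩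
      map_add' := by
        intro P Q; ext q; simp [liftVec]; ring
      map_smul' := by
        intro c P; ext q; simp [liftVec]; ring
      invFun := fun x => ⟨fun a => ξ0⁻¹ * x.1 (Sum.inl (), a), ?_⟩
      left_inv := ?_
      right_inv := ?_ }
  · have hx := eq_liftVec_of_mem_ker n d B00 Cc B ξ0 ξ hξ0 x.1 x.2
    have := x.2
    rw [hx] at this
    exact (liftVec_mem_ker_iff n d B00 Cc B ξ0 ξ hξ0 _).mp this
  · intro P
    ext a
    simp [liftVec, hξ0]
  · intro x
    ext q
    exact (congrFun (eq_liftVec_of_mem_ker n d B00 Cc B ξ0 ξ hξ0 x.1 x.2) q).symm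

/-- the matrix of the map `Q ↦ ∑_j (∑_k ξ_k B^{jk}) Q_j`. -/
noncomputable def Nmat : Matrix (Fin n) (Fin d × Fin n) ℝ :=
  fun a q => (∑ k, ξ k • B q.1 k) a q.2

lemma Nmat_mulVec (Q : Fin d × Fin n → ℝ) (a : Fin n) :
    (Nmat n d B ξ).mulVec Q a = ∑ j, ∑ b, (∑ k, ξ k • B j k) a b * Q (j, b) := by
  rw [Matrix.mulVec, dotProduct, Fintype.sum_prod_type]
  rfl

lemma mem_ker_Asym_zero_iff (i0 : Fin d) (hi0 : ξ i0 ≠ 0) (x : (Unit ⊕ Fin d) × Fin n → ℝ) :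
    x ∈ LinearMap.ker (Asym n d B00 Cc B 0 ξ).mulVecLin ↔
      (∀ a, x (Sum.inl (), a) = 0) ∧
        (Nmat n d B ξ).mulVec (fun q => x (Sum.inr q.1, q.2)) = 0 := by
  rw [mem_ker_Asym_iff]
  constructor
  · rintro ⟨h1, h2⟩
    have hx0 : ∀ a, x (Sum.inl (), a) = 0 := by
      intro a
      have := h2 i0 a
      rw [Asym_mulVec_inr] at this
      simp at this
      rcases this with h | h
      · exact absurd h hi0
      · exact h
    refine ⟨hx0, ?_⟩
    funext a
    have := h1 a
    rw [Asym_mulVec_inl] at this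
    rw [Nmat_mulVec]
    simpa [hx0] using this
  · rintro ⟨h1, h2⟩
    constructor
    · intro a
      rw [Asym_mulVec_inl]
      have := congrFun h2 a
      rw [Nmat_mulVec] at this
      simpa [h1] using this
    · intro i a
      rw [Asym_mulVec_inr]
      simp [h1]

lemma finrank_ker_Asym_zero (i0 : Fin d) (hi0 : ξ i0 ≠ 0) :
    Module.finrank ℝ (LinearMap.ker (Asym n d B00 Cc B 0 ξ).mulVecLin) =
      Module.finrank ℝ (LinearMap.ker (Nmat n d B ξ).mulVecLin) := by
  refine LinearEquiv.finrank_eq ?_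
  refine
    { toFun := fun x => ⟨fun q => x.1 (Sum.inr q.1, q.2),
        ((mem_ker_Asym_zero_iff n d B00 Cc B ξ i0 hi0 x.1).mp x.2).2⟩
      map_add' := by intro x y; ext q; simp
      map_smul' := by intro c x; ext q; simp
      invFun := fun Q => ⟨fun p => Sum.elim (fun _ => (0:ℝ)) (fun j => Q.1 (j, p.2)) p.1, ?_⟩
      left_inv := ?_
      right_inv := ?_ }
  · rw [mem_ker_Asym_zero_iff n d B00 Cc B ξ i0 hi0]
    exact ⟨fun a => rfl, Q.2⟩
  · intro x
    ext p
    rcases p with ⟨s | j, a⟩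
    · cases s
      exact (((mem_ker_Asym_zero_iff n d B00 Cc B ξ i0 hi0 x.1).mp x.2).1 a).symm
    · rfl
  · intro Q
    ext q
    rfl

lemma finrank_ker_Nmat (hdet : IsUnit (Bsym n d B00 Cc B 0 ξ).det) :
    Module.finrank ℝ (LinearMap.ker (Nmat n d B ξ).mulVecLin) + n = d * n := by
  have hsurj : Function.Surjective (Nmat n d B ξ).mulVecLin := by
    intro y
    set P : Fin n → ℝ := (Bsym n d B00 Cc B 0 ξ)⁻¹.mulVec y with hP
    refine ⟨fun q => ξ q.1 * P q.2, ?_⟩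
    have hBP : (Bsym n d B00 Cc B 0 ξ).mulVec P = y := by
      rw [hP, Matrix.mulVec_mulVec, Matrix.mul_nonsing_inv _ hdet, Matrix.one_mulVec]
    funext a
    rw [Matrix.mulVecLin_apply, Nmat_mulVec]
    have := congrFun hBP a
    rw [Bsym_mulVec] at this
    simp only [zero_mul, zero_add] at this
    rw [← this]
    refine Finset.sum_congr rfl fun j _ => ?_
    simp only [Matrix.mulVec, dotProduct, Finset.mul_sum]
    exact Finset.sum_congr rfl fun b _ => by ring
  have h1 := LinearMap.finrank_range_add_finrank_ker (Nmat n d B ξ).mulVecLin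
  rw [LinearMap.range_eq_top.mpr hsurj, finrank_top] at h1
  simp only [Module.finrank_fintype_fun_eq_card, Fintype.card_prod, Fintype.card_fin] at h1
  omega

noncomputable def Pmat : Matrix (Fin n) (Fin n) (Polynomial ℝ) :=
  (Polynomial.X : Polynomial ℝ) ^ 2 • B00.map Polynomial.C +
    (Polynomial.X : Polynomial ℝ) • (∑ j, ξ j • Cc j).map Polynomial.C +
    (∑ j, ∑ k, (ξ j * ξ k) • B j k).map Polynomial.C

lemma Pmat_apply (a b : Fin n) :
    Pmat n d B00 Cc B ξ a b =
      Polynomial.C (B00 a b) * Polynomial.X ^ 2 +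
        Polynomial.C ((∑ j, ξ j • Cc j) a b) * Polynomial.X +
        Polynomial.C ((∑ j, ∑ k, (ξ j * ξ k) • B j k) a b) := by
  simp [Pmat, Matrix.add_apply, Matrix.smul_apply, Matrix.map_apply, smul_eq_mul]

lemma Pmat_map_eval (t : ℝ) :
    (Pmat n d B00 Cc B ξ).map (Polynomial.evalRingHom t) = Bsym n d B00 Cc B t ξ := by
  funext a b
  rw [Matrix.map_apply, Pmat_apply]
  simp [Bsym, Matrix.add_apply, Matrix.smul_apply, smul_eq_mul]
  ring

lemma dispPoly_eq : dispPoly n d B00 Cc B ξ = (Pmat n d B00 Cc B ξ).det := rfl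

lemma dispPoly_eval (t : ℝ) :
    (dispPoly n d B00 Cc B ξ).eval t = (Bsym n d B00 Cc B t ξ).det := by
  rw [dispPoly_eq, ← Pmat_map_eval n d B00 Cc B ξ t]
  have := RingHom.map_det (Polynomial.evalRingHom t) (Pmat n d B00 Cc B ξ)
  simpa using this

lemma natDegree_dispPoly_le : (dispPoly n d B00 Cc B ξ).natDegree ≤ 2 * n := by
  rw [dispPoly_eq, Matrix.det_apply']
  refine Polynomial.natDegree_sum_le_of_forall_le _ _ fun σ _ => ?_
  refine le_trans (Polynomial.natDegree_mul_le) ?_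
  rw [Polynomial.natDegree_intCast, zero_add]
  refine le_trans (Polynomial.natDegree_prod_le _ _) ?_
  calc ∑ i : Fin n, (Pmat n d B00 Cc B ξ (σ i) i).natDegree ≤ ∑ _i : Fin n, 2 :=
        Finset.sum_le_sum fun i _ => by
          rw [Pmat_apply]; exact Polynomial.natDegree_quadratic_le
    _ = 2 * n := by simp [mul_comm]

lemma coeff_dispPoly : (dispPoly n d B00 Cc B ξ).coeff (2 * n) = B00.det := by
  rw [dispPoly_eq, Matrix.det_apply', Polynomial.finset_sum_coeff]
  rw [Matrix.det_apply']
  refine Finset.sum_congr rfl fun σ _ => ?_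
  rw [Polynomial.coeff_intCast_mul]
  congr 1
  have h : ∀ p ∈ (Finset.univ : Finset (Fin n)),
      (Pmat n d B00 Cc B ξ (σ p) p).natDegree ≤ 2 := fun p _ => by
    rw [Pmat_apply]; exact Polynomial.natDegree_quadratic_le
  have := Polynomial.coeff_prod_of_natDegree_le Finset.univ (fun i => Pmat n d B00 Cc B ξ (σ i) i) 2 h
  simp only [Finset.card_univ, Fintype.card_fin] at this
  rw [mul_comm 2 n, this]
  refine Finset.prod_congr rfl fun i _ => ?_
  rw [Pmat_apply]
  simp [Polynomial.coeff_add, Polynomial.coeff_C_mul, Polynomial.coeff_X_pow,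
    Polynomial.coeff_C]

lemma eigenspace_eq (hdet : IsUnit B00.det) (μ : ℝ) :
    Module.End.eigenspace ((A0mat n d B00)⁻¹ * Asym n d B00 Cc B 0 ξ).mulVecLin μ =
      LinearMap.ker (Asym n d B00 Cc B (-μ) ξ).mulVecLin := by
  have hright : A0mat n d B00 * A0inv n d B00 = 1 := A0_mul_A0inv n d B00 hdet
  have hleft : A0inv n d B00 * A0mat n d B00 = 1 := mul_eq_one_comm.mp hright
  have hinv : (A0mat n d B00)⁻¹ = A0inv n d B00 := Matrix.inv_eq_right_inv hright
  ext x
  rw [Module.End.mem_eigenspace_iff, LinearMap.mem_ker, Matrix.mulVecLin_apply,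
    Matrix.mulVecLin_apply, hinv]
  have hdec : Asym n d B00 Cc B (-μ) ξ =
      Asym n d B00 Cc B 0 ξ + (-μ) • A0mat n d B00 := Asym_decomp n d B00 Cc B (-μ) ξ
  constructor
  · intro h
    have h2 : (Asym n d B00 Cc B 0 ξ).mulVec x = μ • (A0mat n d B00).mulVec x := by
      have h3 := congrArg ((A0mat n d B00).mulVec) h
      rwa [Matrix.mulVec_mulVec, ← Matrix.mul_assoc, hright, Matrix.one_mul,
        Matrix.mulVec_smul] at h3
    rw [hdec, Matrix.add_mulVec, Matrix.smul_mulVec, h2]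
    simp
  · intro h
    rw [hdec, Matrix.add_mulVec, Matrix.smul_mulVec] at h
    have h2 : (Asym n d B00 Cc B 0 ξ).mulVec x = μ • (A0mat n d B00).mulVec x := by
      have := congrArg (fun v => v + μ • (A0mat n d B00).mulVec x) h
      simpa [add_assoc, neg_smul] using this
    have := congrArg ((A0inv n d B00).mulVec) h2
    rwa [Matrix.mulVec_mulVec, Matrix.mulVec_smul, Matrix.mulVec_mulVec, hleft,
      Matrix.one_mulVec] at this

end main

/-- Semi-strict definite hyperbolicity (`B00 < 0`; for every unit `ξ` all zeros of
`p^ξ` are real and nonzero; each zero of multiplicity `ν` has `dim ker B(ξ0,ξ) = ν`)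
implies that the first-order pencil is diagonalizable over `ℝ`: the eigenspaces of
`(A⁰)⁻¹ A(ξ)` together span the whole `(d+1)n`-dimensional space. -/
theorem stmt9 (n d : ℕ) (B00 : Matrix (Fin n) (Fin n) ℝ)
    (Cc : Fin d → Matrix (Fin n) (Fin n) ℝ)
    (B : Fin d → Fin d → Matrix (Fin n) (Fin n) ℝ)
    (hB00 : (-B00).PosDef)
    (hreal : ∀ ξ : Fin d → ℝ, ∑ k, ξ k ^ 2 = 1 →
      Polynomial.Splits (dispPoly n d B00 Cc B ξ))
    (hnonzero : ∀ ξ : Fin d → ℝ, ∑ k, ξ k ^ 2 = 1 →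
      (0 : ℝ) ∉ (dispPoly n d B00 Cc B ξ).roots)
    (hmult : ∀ ξ : Fin d → ℝ, ∑ k, ξ k ^ 2 = 1 →
      ∀ ξ0 ∈ (dispPoly n d B00 Cc B ξ).roots,
        Module.finrank ℝ (LinearMap.ker (Bsym n d B00 Cc B ξ0 ξ).mulVecLin) =
          (dispPoly n d B00 Cc B ξ).roots.count ξ0) :
    ∀ ξ : Fin d → ℝ, ∑ k, ξ k ^ 2 = 1 →
      Module.finrank ℝ
        ↥(⨆ μ : ℝ, Module.End.eigenspace
          (((A0mat n d B00)⁻¹ * Asym n d B00 Cc B 0 ξ).mulVecLin) μ) = (d + 1) * n := by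
  intro ξ hξ
  classical
  -- B00 has nonzero determinant
  have hdpos := hB00.det_pos
  have hd0 : B00.det ≠ 0 := by
    intro h
    rw [Matrix.det_neg, h, mul_zero] at hdpos
    exact lt_irrefl 0 hdpos
  have hdetB00 : IsUnit B00.det := isUnit_iff_ne_zero.mpr hd0
  -- some component of ξ is nonzero
  obtain ⟨i0, hi0⟩ : ∃ i, ξ i ≠ 0 := by
    by_contra h
    push_neg at h
    simp [h] at hξ
  set p := dispPoly n d B00 Cc B ξ with hpdef
  have hp_ne : p ≠ 0 := by
    intro h
    have := coeff_dispPoly n d B00 Cc B ξ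
    rw [← hpdef, h] at this
    simp at this
    exact hd0 this.symm
  have hdeg : p.natDegree = 2 * n := by
    refine le_antisymm (natDegree_dispPoly_le n d B00 Cc B ξ) ?_
    refine Polynomial.le_natDegree_of_ne_zero ?_
    rw [← hpdef] at *
    rw [show p.coeff (2 * n) = B00.det from coeff_dispPoly n d B00 Cc B ξ]
    exact hd0
  have hcard : p.roots.card = 2 * n := by
    rw [← hdeg]
    exact (Polynomial.splits_iff_card_roots.mp (hreal ξ hξ))
  have h0notin := hnonzero ξ hξ
  have hdetB0 : IsUnit (Bsym n d B00 Cc B 0 ξ).det := by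
    rw [isUnit_iff_ne_zero]
    intro h
    apply h0notin
    rw [Polynomial.mem_roots hp_ne]
    rw [Polynomial.IsRoot, hpdef, dispPoly_eval]
    exact h
  set f := (((A0mat n d B00)⁻¹ * Asym n d B00 Cc B 0 ξ)).mulVecLin with hfdef
  have hE : ∀ μ : ℝ, Module.End.eigenspace f μ =
      LinearMap.ker (Asym n d B00 Cc B (-μ) ξ).mulVecLin :=
    eigenspace_eq n d B00 Cc B ξ hdetB00
  have hE0 : Module.finrank ℝ ↥(Module.End.eigenspace f 0) + n = d * n := by
    rw [hE 0, neg_zero, finrank_ker_Asym_zero n d B00 Cc B ξ i0 hi0]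
    exact finrank_ker_Nmat n d B00 Cc B ξ hdetB0
  have hEt : ∀ t ∈ p.roots.toFinset,
      Module.finrank ℝ ↥(Module.End.eigenspace f (-t)) = p.roots.count t := by
    intro t ht
    have ht' : t ∈ p.roots := Multiset.mem_toFinset.mp ht
    have htne : t ≠ 0 := fun h => h0notin (h ▸ ht')
    rw [hE (-t), neg_neg, finrank_ker_Asym n d B00 Cc B t ξ htne, hmult ξ hξ t ht']
  set S : Finset ℝ := insert (0 : ℝ) (p.roots.toFinset.image (fun t => -t)) with hSdef
  have h0S : (0 : ℝ) ∉ p.roots.toFinset.image (fun t => -t) := by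
    simp only [Finset.mem_image, not_exists, not_and]
    intro t ht h
    have : t = 0 := by linarith
    exact h0notin (this ▸ Multiset.mem_toFinset.mp ht)
  have hsum : ∑ μ ∈ S, Module.finrank ℝ ↥(Module.End.eigenspace f μ) = (d + 1) * n := by
    rw [hSdef, Finset.sum_insert h0S,
      Finset.sum_image (fun a _ b _ h => neg_injective h)]
    rw [Finset.sum_congr rfl hEt, Multiset.toFinset_sum_count_eq, hcard]
    have : (d + 1) * n = d * n + n := by ring
    omega
  have hindep := Module.End.eigenspaces_iSupIndep f
  have hlow : (d + 1) * n ≤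
      Module.finrank ℝ ↥(⨆ μ : ℝ, Module.End.eigenspace f μ) := by
    rw [← hsum, ← finrank_biSup_of_indep hindep S]
    exact Submodule.finrank_mono (iSup₂_le fun μ _ => le_iSup _ μ)
  have hhigh : Module.finrank ℝ ↥(⨆ μ : ℝ, Module.End.eigenspace f μ) ≤ (d + 1) * n := by
    have h1 := Submodule.finrank_le (⨆ μ : ℝ, Module.End.eigenspace f μ)
    have h2 : Module.finrank ℝ ((Unit ⊕ Fin d) × Fin n → ℝ) = (d + 1) * n := by
      rw [Module.finrank_fintype_fun_eq_card]
      simp [Fintype.card_prod, Fintype.card_sum, mul_comm, Nat.add_mul, Nat.mul_add]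
      ring
    rw [h2] at h1
    exact h1
  exact le_antisymm hhigh hlow
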